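/- Let A, B be k-linear abelian categories with all hom spaces of B finite-dimensional over k, and F, G : A → B right exact k-linear functors. If A has a projective generator P and every object of A has finite length, then Nat(F, G) is finite-dimensional over k, with dim Nat(F, G) ≤ dim Hom_B(F(P), G(P)). -/

import Mathlib

open CategoryTheory CategoryTheory.Limits

attribute [local instance] CategoryTheory.Abelian.hasFiniteBiproducts

/-- Let `A`, `B` be `k`-linear abelian categories with the hom spaces
of `B` finite-dimensional, and `F, G : A ⥤ B` right exact `k`-linear functors. If `A`
has a projective generator `P` and every object of `A` has finite length, then
`Nat(F, G)` is finite-dimensional of dimension at most `dim Hom(F(P), G(P))`. -/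
theorem natTrans_finiteDimensional
    (k : Type*) [Field k]
    {A : Type*} [Category A] [Abelian A] [Linear k A]
    {B : Type*} [Category B] [Abelian B] [Linear k B]
    [∀ X Y : B, FiniteDimensional k (X ⟶ Y)]
    (F G : A ⥤ B) [F.Additive] [F.Linear k] [PreservesFiniteColimits F]
    [G.Additive] [G.Linear k] [PreservesFiniteColimits G]
    (P : A) [Projective P]
    (hP : ∀ X : A, ∃ (n : ℕ) (q : (⨁ fun _ : Fin n => P) ⟶ X), Epi q)
    [∀ X : A, IsNoetherianObject X] [∀ X : A, IsArtinianObject X] :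
    FiniteDimensional k (F ⟶ G) ∧
      Module.finrank k (F ⟶ G) ≤ Module.finrank k (F.obj P ⟶ G.obj P) := by
  -- the evaluation-at-`P` linear map
  let e : (F ⟶ G) →ₗ[k] (F.obj P ⟶ G.obj P) :=
    { toFun := fun α => α.app P
      map_add' := fun α β => rfl
      map_smul' := fun c α => rfl }
  have hinj : Function.Injective e := by
    intro α β h
    rw [← sub_eq_zero] at h ⊢
    set γ := α - β with hγ
    have hγP : γ.app P = 0 := h
    ext X
    obtain ⟨n, q, hq⟩ := hP X
    have hepi : Epi (F.map q) := inferInstance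
    have hbi : γ.app (⨁ fun _ : Fin n => P) = 0 := by
      rw [← cancel_epi (F.mapBiproduct fun _ : Fin n => P).inv,
        Functor.mapBiproduct_inv, comp_zero]
      ext j
      simp [γ.naturality, hγP]
    rw [← cancel_epi (F.map q)]
    have := γ.naturality q
    simp [this, hbi]
  constructor
  · exact FiniteDimensional.of_injective e hinj
  · exact LinearMap.finrank_le_finrank_of_injective hinj
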